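/- (Disagreement inequality.) Consider an algorithm of the form (alg) with a trajectory (x_i^k, y_i^k, z_i^k, u_i^k, v_i^k), and let (x*ᵢ, y*ᵢ, z*ᵢ, u*ᵢ, v*ᵢ) be a fixed point satisfying the fixed-point conditions (consensus, optimality, robustness). Let Q ≻ 0 (ν×ν) and R ⪰ 0 (c×c) be symmetric, ρ ≥ 0, M₀ := [[−2mL, L+m],[L+m, −2]], M₁ := [[σ²−1, 1],[1, −1]], and suppose N₂ᵀ · blockdiag(Q, −ρ²Q, M₀, M₁⊗R) · N₂ ⪯ 0, where N₂ stacks the rows [A B_u B_v], [I 0 0], [C_y D_{yu} D_{yv}], [0 1 0], [C_z D_{zu} D_{zv}], [0 0 I_c]. Then, with x̃^k, ỹ^k, ũ^k, z̃^k, ṽ^k the stacked error vectors, for every k: (x̃^{k+1})ᵀ ((I−Π)⊗Q) x̃^{k+1} − ρ² (x̃^k)ᵀ ((I−Π)⊗Q) x̃^k + [ỹ^k; ũ^k]ᵀ (M₀ ⊗ (I−Π)) [ỹ^k; ũ^k] + [z̃^k; ṽ^k]ᵀ (M₁ ⊗ (I−Π) ⊗ R) [z̃^k; ṽ^k] ≤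 0, where Π := (1/n)·1_n 1_nᵀ. -/
import Mathlib


open Matrix BigOperators Kronecker

/-- The projection matrix `Π = (1/n) 1ₙ 1ₙᵀ` onto the span of the all-ones vector. -/
noncomputable def projOnes (n : ℕ) : Matrix (Fin n) (Fin n) ℝ :=
  Matrix.of fun _ _ => (n : ℝ)⁻¹

/-- The matrix `M₀ = [[−2mL, L+m],[L+m, −2]]`. -/
noncomputable def M0 (m L : ℝ) : Matrix (Fin 2) (Fin 2) ℝ :=
  !![-(2*m*L), L+m; L+m, -2]

/-- The matrix `M₁ = [[σ²−1, 1],[1, −1]]`. -/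
noncomputable def M1 (σ : ℝ) : Matrix (Fin 2) (Fin 2) ℝ :=
  !![σ^2 - 1, 1; 1, -1]

/-- The quadratic form `[y; u]ᵀ M₀ [y; u]`. -/
def quadM0 (m L y u : ℝ) : ℝ := -(2*m*L) * y^2 + 2*(L+m) * y * u - 2 * u^2


lemma master {V : Type*} (B : V → V → ℝ) [SubtractionMonoid V]
    (hB : ∀ a b c d : V, B (a - b) (c - d) = B a c - B a d - B b c + B b d)
    (n : ℕ) (hn : (n:ℝ) ≠ 0) (w : Fin n → V) :
    ∑ i, ∑ j, ((1 : Matrix (Fin n) (Fin n) ℝ) - projOnes n) i j * B (w i) (w j)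
      = (2*(n:ℝ))⁻¹ * ∑ i, ∑ j, B (w i - w j) (w i - w j) := by
  have h1 : ∀ i j : Fin n, ((1 : Matrix (Fin n) (Fin n) ℝ) - projOnes n) i j
      = (if i = j then (1:ℝ) else 0) - (n:ℝ)⁻¹ := by
    intro i j; simp [projOnes, Matrix.sub_apply, Matrix.one_apply]
  simp only [h1, hB, sub_mul, mul_sub]
  simp only [Finset.sum_sub_distrib, Finset.sum_add_distrib, ite_mul, one_mul, zero_mul,
    Finset.sum_ite_eq, Finset.mem_univ, if_true]
  rw [show ∑ i : Fin n, ∑ j : Fin n, B (w j) (w i) = ∑ i : Fin n, ∑ j : Fin n, B (w i) (w j)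
      from Finset.sum_comm]
  simp only [← Finset.mul_sum, Finset.sum_const, Finset.card_univ, Fintype.card_fin,
    nsmul_eq_mul]
  field_simp
  ring

lemma red1 {n ν : ℕ} (Q : Matrix (Fin ν) (Fin ν) ℝ) (a : Fin n → Fin ν → ℝ) :
    (fun p : Fin n × Fin ν => a p.1 p.2) ⬝ᵥ
      ((1 - projOnes n) ⊗ₖ Q).mulVec (fun p : Fin n × Fin ν => a p.1 p.2)
    = ∑ i, ∑ j, ((1 : Matrix (Fin n) (Fin n) ℝ) - projOnes n) i j *
        (a i ⬝ᵥ Q.mulVec (a j)) := by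
  simp only [dotProduct, mulVec, kroneckerMap_apply, Fintype.sum_prod_type,
    Finset.mul_sum, Finset.sum_mul]
  rw [Finset.sum_congr rfl fun i _ => Finset.sum_comm]
  exact Finset.sum_congr rfl fun i _ => Finset.sum_congr rfl fun j _ =>
    Finset.sum_congr rfl fun α _ => Finset.sum_congr rfl fun β _ => by ring

lemma red2 {n : ℕ} (M : Matrix (Fin 2) (Fin 2) ℝ) (w : Fin 2 → Fin n → ℝ) :
    (fun p : Fin 2 × Fin n => w p.1 p.2) ⬝ᵥ
      (M ⊗ₖ (1 - projOnes n)).mulVec (fun p : Fin 2 × Fin n => w p.1 p.2)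
    = ∑ i, ∑ j, ((1 : Matrix (Fin n) (Fin n) ℝ) - projOnes n) i j *
        (∑ s, ∑ t, M s t * (w s i * w t j)) := by
  simp only [dotProduct, mulVec, kroneckerMap_apply, Fintype.sum_prod_type,
    Finset.mul_sum, Finset.sum_mul]
  rw [Finset.sum_comm]
  refine Finset.sum_congr rfl fun i _ => ?_
  rw [Finset.sum_congr rfl fun s _ => Finset.sum_comm, Finset.sum_comm]
  refine Finset.sum_congr rfl fun j _ => Finset.sum_congr rfl fun s _ =>
    Finset.sum_congr rfl fun t _ => ?_
  ring

lemma red3 {n c : ℕ} (M : Matrix (Fin 2) (Fin 2) ℝ) (R : Matrix (Fin c) (Fin c) ℝ)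
    (w : Fin 2 → Fin n → Fin c → ℝ) :
    (fun p : Fin 2 × (Fin n × Fin c) => w p.1 p.2.1 p.2.2) ⬝ᵥ
      (M ⊗ₖ ((1 - projOnes n) ⊗ₖ R)).mulVec
      (fun p : Fin 2 × (Fin n × Fin c) => w p.1 p.2.1 p.2.2)
    = ∑ i, ∑ j, ((1 : Matrix (Fin n) (Fin n) ℝ) - projOnes n) i j *
        (∑ s, ∑ t, M s t * (w s i ⬝ᵥ R.mulVec (w t j))) := by
  simp only [dotProduct, mulVec, kroneckerMap_apply, Fintype.sum_prod_type,
    Finset.mul_sum, Finset.sum_mul]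
  conv_lhs => rw [Finset.sum_comm]
  conv_lhs => enter [2,i,2,s,2,α]; rw [Finset.sum_comm]
  conv_lhs => enter [2,i,2,s]; rw [Finset.sum_comm]
  conv_lhs => enter [2,i]; rw [Finset.sum_comm]
  conv_lhs => enter [2,i,2,j,2,s]; rw [Finset.sum_comm]
  refine Finset.sum_congr rfl fun i _ => Finset.sum_congr rfl fun j _ =>
    Finset.sum_congr rfl fun s _ => Finset.sum_congr rfl fun t _ =>
    Finset.sum_congr rfl fun α _ => Finset.sum_congr rfl fun β _ => by ring

lemma dotsymm {c : ℕ} (R : Matrix (Fin c) (Fin c) ℝ) (hR : Rᵀ = R) (a b : Fin c → ℝ) :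
    a ⬝ᵥ R.mulVec b = b ⬝ᵥ R.mulVec a := by
  have hs : ∀ α β, R α β = R β α := fun α β => by
    conv_lhs => rw [← hR]
    rfl
  simp only [dotProduct, mulVec, Finset.mul_sum]
  rw [Finset.sum_comm]
  exact Finset.sum_congr rfl fun α _ => Finset.sum_congr rfl fun β _ => by rw [hs α β]; ring

lemma pairIneq {ν c : ℕ} {m L σ ρ : ℝ}
    (A : Matrix (Fin ν) (Fin ν) ℝ) (Bu : Fin ν → ℝ) (Bv : Matrix (Fin ν) (Fin c) ℝ)
    (Cy : Fin ν → ℝ) (Dyu : ℝ) (Dyv : Fin c → ℝ)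
    (Cz : Matrix (Fin c) (Fin ν) ℝ) (Dzu : Fin c → ℝ) (Dzv : Matrix (Fin c) (Fin c) ℝ)
    (Q : Matrix (Fin ν) (Fin ν) ℝ) (R : Matrix (Fin c) (Fin c) ℝ) (hR : Rᵀ = R)
    (hLMI2 : ∀ (xv : Fin ν → ℝ) (uv : ℝ) (vv : Fin c → ℝ),
      (A.mulVec xv + uv • Bu + Bv.mulVec vv) ⬝ᵥ
          Q.mulVec (A.mulVec xv + uv • Bu + Bv.mulVec vv)
        - ρ^2 * (xv ⬝ᵥ Q.mulVec xv)
        + quadM0 m L (Cy ⬝ᵥ xv + Dyu * uv + Dyv ⬝ᵥ vv) uv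
        + (σ^2 - 1) * ((Cz.mulVec xv + uv • Dzu + Dzv.mulVec vv) ⬝ᵥ
            R.mulVec (Cz.mulVec xv + uv • Dzu + Dzv.mulVec vv))
        + 2 * ((Cz.mulVec xv + uv • Dzu + Dzv.mulVec vv) ⬝ᵥ R.mulVec vv)
        - vv ⬝ᵥ R.mulVec vv ≤ 0)
    (xv : Fin ν → ℝ) (xv' : Fin ν → ℝ) (uv yv : ℝ) (vv zv : Fin c → ℝ)
    (hx : xv' = A.mulVec xv + uv • Bu + Bv.mulVec vv)
    (hy : yv = Cy ⬝ᵥ xv + Dyu * uv + Dyv ⬝ᵥ vv)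
    (hz : zv = Cz.mulVec xv + uv • Dzu + Dzv.mulVec vv) :
    xv' ⬝ᵥ Q.mulVec xv' - ρ^2 * (xv ⬝ᵥ Q.mulVec xv) + quadM0 m L yv uv
      + ((σ^2 - 1) * (zv ⬝ᵥ R.mulVec zv) + zv ⬝ᵥ R.mulVec vv
         + vv ⬝ᵥ R.mulVec zv - vv ⬝ᵥ R.mulVec vv) ≤ 0 := by
  subst hx hy hz
  have h := hLMI2 xv uv vv
  have hsym := dotsymm R hR vv (Cz.mulVec xv + uv • Dzu + Dzv.mulVec vv)
  linarith

/-- Disagreement inequality: feasibility of (LMI-2) implies the per-step disagreement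
Lyapunov inequality along any trajectory. -/
theorem stmt_8
    (ν c n : ℕ) (m L σ ρ : ℝ)
    (hm : 0 < m) (hmL : m ≤ L) (hσ0 : 0 ≤ σ) (hσ1 : σ < 1) (hρ : 0 ≤ ρ)
    (A : Matrix (Fin ν) (Fin ν) ℝ) (Bu : Fin ν → ℝ) (Bv : Matrix (Fin ν) (Fin c) ℝ)
    (Cy : Fin ν → ℝ) (Dyu : ℝ) (Dyv : Fin c → ℝ)
    (Cz : Matrix (Fin c) (Fin ν) ℝ) (Dzu : Fin c → ℝ) (Dzv : Matrix (Fin c) (Fin c) ℝ)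
    -- trajectory of the algorithm
    (x : ℕ → Fin n → Fin ν → ℝ) (y u : ℕ → Fin n → ℝ) (z v : ℕ → Fin n → Fin c → ℝ)
    (htraj1 : ∀ k i, x (k+1) i = A.mulVec (x k i) + u k i • Bu + Bv.mulVec (v k i))
    (htraj2 : ∀ k i, y k i = Cy ⬝ᵥ x k i + Dyu * u k i + Dyv ⬝ᵥ v k i)
    (htraj3 : ∀ k i, z k i = Cz.mulVec (x k i) + u k i • Dzu + Dzv.mulVec (v k i))
    -- fixed point satisfying the fixed-point conditions
    (xstar : Fin n → Fin ν → ℝ) (ystar ustar : Fin n → ℝ)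
    (zstar vstar : Fin n → Fin c → ℝ)
    (hstar1 : ∀ i, xstar i = A.mulVec (xstar i) + ustar i • Bu + Bv.mulVec (vstar i))
    (hstar2 : ∀ i, ystar i = Cy ⬝ᵥ xstar i + Dyu * ustar i + Dyv ⬝ᵥ vstar i)
    (hstar3 : ∀ i, zstar i = Cz.mulVec (xstar i) + ustar i • Dzu + Dzv.mulVec (vstar i))
    (hcons_y : ∀ i j, ystar i = ystar j) (hopt_u : ∑ i, ustar i = 0)
    (hcons_z : ∀ i j, zstar i = zstar j) (hrob_v : ∀ i, vstar i = 0)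
    -- Q ≻ 0, R ⪰ 0, and (LMI-2) as a quadratic form
    (Q : Matrix (Fin ν) (Fin ν) ℝ) (R : Matrix (Fin c) (Fin c) ℝ)
    (hQ : Q.PosDef) (hR : R.PosSemidef)
    (hLMI2 : ∀ (xv : Fin ν → ℝ) (uv : ℝ) (vv : Fin c → ℝ),
      (A.mulVec xv + uv • Bu + Bv.mulVec vv) ⬝ᵥ
          Q.mulVec (A.mulVec xv + uv • Bu + Bv.mulVec vv)
        - ρ^2 * (xv ⬝ᵥ Q.mulVec xv)
        + quadM0 m L (Cy ⬝ᵥ xv + Dyu * uv + Dyv ⬝ᵥ vv) uv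
        + (σ^2 - 1) * ((Cz.mulVec xv + uv • Dzu + Dzv.mulVec vv) ⬝ᵥ
            R.mulVec (Cz.mulVec xv + uv • Dzu + Dzv.mulVec vv))
        + 2 * ((Cz.mulVec xv + uv • Dzu + Dzv.mulVec vv) ⬝ᵥ R.mulVec vv)
        - vv ⬝ᵥ R.mulVec vv ≤ 0) :
    ∀ k : ℕ,
      (fun p : Fin n × Fin ν => x (k+1) p.1 p.2 - xstar p.1 p.2) ⬝ᵥ
          ((1 - projOnes n) ⊗ₖ Q).mulVec
          (fun p : Fin n × Fin ν => x (k+1) p.1 p.2 - xstar p.1 p.2)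
        - ρ^2 * ((fun p : Fin n × Fin ν => x k p.1 p.2 - xstar p.1 p.2) ⬝ᵥ
            ((1 - projOnes n) ⊗ₖ Q).mulVec
            (fun p : Fin n × Fin ν => x k p.1 p.2 - xstar p.1 p.2))
        + (fun p : Fin 2 × Fin n =>
              if p.1 = 0 then y k p.2 - ystar p.2 else u k p.2 - ustar p.2) ⬝ᵥ
            ((M0 m L) ⊗ₖ (1 - projOnes n)).mulVec
            (fun p : Fin 2 × Fin n =>
              if p.1 = 0 then y k p.2 - ystar p.2 else u k p.2 - ustar p.2)
        + (fun p : Fin 2 × (Fin n × Fin c) =>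
              if p.1 = 0 then z k p.2.1 p.2.2 - zstar p.2.1 p.2.2
              else v k p.2.1 p.2.2 - vstar p.2.1 p.2.2) ⬝ᵥ
            ((M1 σ) ⊗ₖ ((1 - projOnes n) ⊗ₖ R)).mulVec
            (fun p : Fin 2 × (Fin n × Fin c) =>
              if p.1 = 0 then z k p.2.1 p.2.2 - zstar p.2.1 p.2.2
              else v k p.2.1 p.2.2 - vstar p.2.1 p.2.2) ≤ 0 := by
  
  intro k
  rcases Nat.eq_zero_or_pos n with hn0 | hnpos
  · subst hn0
    simp [dotProduct]
  have hn : ((n:ℝ)) ≠ 0 := by positivity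
  -- bilinearity facts
  have hB1 : ∀ a b c' d : Fin ν → ℝ,
      (a - b) ⬝ᵥ Q.mulVec (c' - d)
        = a ⬝ᵥ Q.mulVec c' - a ⬝ᵥ Q.mulVec d - b ⬝ᵥ Q.mulVec c' + b ⬝ᵥ Q.mulVec d := by
    intro a b c' d
    simp [Matrix.mulVec_sub, dotProduct_sub, sub_dotProduct]
    ring
  have hB2 : ∀ a b c' d : Fin 2 → ℝ,
      (∑ s, ∑ t, M0 m L s t * ((a - b) s * (c' - d) t))
        = (∑ s, ∑ t, M0 m L s t * (a s * c' t)) - (∑ s, ∑ t, M0 m L s t * (a s * d t))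
          - (∑ s, ∑ t, M0 m L s t * (b s * c' t)) + (∑ s, ∑ t, M0 m L s t * (b s * d t)) := by
    intro a b c' d
    have h : ∀ s t : Fin 2, M0 m L s t * ((a s - b s) * (c' t - d t))
        = M0 m L s t * (a s * c' t) - M0 m L s t * (a s * d t)
          - M0 m L s t * (b s * c' t) + M0 m L s t * (b s * d t) := fun s t => by ring
    simp only [Pi.sub_apply, h, Finset.sum_add_distrib, Finset.sum_sub_distrib]
  have hB3 : ∀ a b c' d : Fin 2 → Fin c → ℝ,
      (∑ s, ∑ t, M1 σ s t * ((a - b) s ⬝ᵥ R.mulVec ((c' - d) t)))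
        = (∑ s, ∑ t, M1 σ s t * (a s ⬝ᵥ R.mulVec (c' t)))
          - (∑ s, ∑ t, M1 σ s t * (a s ⬝ᵥ R.mulVec (d t)))
          - (∑ s, ∑ t, M1 σ s t * (b s ⬝ᵥ R.mulVec (c' t)))
          + (∑ s, ∑ t, M1 σ s t * (b s ⬝ᵥ R.mulVec (d t))) := by
    intro a b c' d
    have h : ∀ s t : Fin 2, M1 σ s t * ((a s - b s) ⬝ᵥ R.mulVec (c' t - d t))
        = M1 σ s t * (a s ⬝ᵥ R.mulVec (c' t)) - M1 σ s t * (a s ⬝ᵥ R.mulVec (d t))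
          - M1 σ s t * (b s ⬝ᵥ R.mulVec (c' t)) + M1 σ s t * (b s ⬝ᵥ R.mulVec (d t)) := by
      intro s t
      simp [Matrix.mulVec_sub, dotProduct_sub, sub_dotProduct]
      ring
    simp only [Pi.sub_apply, h, Finset.sum_add_distrib, Finset.sum_sub_distrib]
  -- the three Kronecker quadratic forms as pairwise sums
  have F1 : (fun p : Fin n × Fin ν => x (k+1) p.1 p.2 - xstar p.1 p.2) ⬝ᵥ
        ((1 - projOnes n) ⊗ₖ Q).mulVec
        (fun p : Fin n × Fin ν => x (k+1) p.1 p.2 - xstar p.1 p.2)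
      = (2*(n:ℝ))⁻¹ * ∑ i, ∑ j, ((fun a => (x (k+1) i a - xstar i a) - (x (k+1) j a - xstar j a)) ⬝ᵥ Q.mulVec (fun a => (x (k+1) i a - xstar i a) - (x (k+1) j a - xstar j a))) :=
    (red1 Q (fun i a => x (k+1) i a - xstar i a)).trans
      (master (fun p q : Fin ν → ℝ => p ⬝ᵥ Q.mulVec q) hB1 n hn
        (fun i a => x (k+1) i a - xstar i a))
  have F0 : (fun p : Fin n × Fin ν => x k p.1 p.2 - xstar p.1 p.2) ⬝ᵥ
        ((1 - projOnes n) ⊗ₖ Q).mulVec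
        (fun p : Fin n × Fin ν => x k p.1 p.2 - xstar p.1 p.2)
      = (2*(n:ℝ))⁻¹ * ∑ i, ∑ j, ((fun a => (x k i a - xstar i a) - (x k j a - xstar j a)) ⬝ᵥ Q.mulVec (fun a => (x k i a - xstar i a) - (x k j a - xstar j a))) :=
    (red1 Q (fun i a => x k i a - xstar i a)).trans
      (master (fun p q : Fin ν → ℝ => p ⬝ᵥ Q.mulVec q) hB1 n hn
        (fun i a => x k i a - xstar i a))
  have F2 : (fun p : Fin 2 × Fin n =>
        if p.1 = 0 then y k p.2 - ystar p.2 else u k p.2 - ustar p.2) ⬝ᵥ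
        ((M0 m L) ⊗ₖ (1 - projOnes n)).mulVec
        (fun p : Fin 2 × Fin n =>
          if p.1 = 0 then y k p.2 - ystar p.2 else u k p.2 - ustar p.2)
      = (2*(n:ℝ))⁻¹ * ∑ i, ∑ j, (∑ s, ∑ t, M0 m L s t * (((if s = 0 then y k i - ystar i else u k i - ustar i) - (if s = 0 then y k j - ystar j else u k j - ustar j)) * ((if t = 0 then y k i - ystar i else u k i - ustar i) - (if t = 0 then y k j - ystar j else u k j - ustar j)))) :=
    (red2 (M0 m L) (fun s i => if s = 0 then y k i - ystar i else u k i - ustar i)).trans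
      (master (fun p q : Fin 2 → ℝ => ∑ s, ∑ t, M0 m L s t * (p s * q t)) hB2 n hn
        (fun i s => if s = 0 then y k i - ystar i else u k i - ustar i))
  have F3 : (fun p : Fin 2 × (Fin n × Fin c) =>
        if p.1 = 0 then z k p.2.1 p.2.2 - zstar p.2.1 p.2.2
        else v k p.2.1 p.2.2 - vstar p.2.1 p.2.2) ⬝ᵥ
        ((M1 σ) ⊗ₖ ((1 - projOnes n) ⊗ₖ R)).mulVec
        (fun p : Fin 2 × (Fin n × Fin c) =>
          if p.1 = 0 then z k p.2.1 p.2.2 - zstar p.2.1 p.2.2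
          else v k p.2.1 p.2.2 - vstar p.2.1 p.2.2)
      = (2*(n:ℝ))⁻¹ * ∑ i, ∑ j, (∑ s, ∑ t, M1 σ s t * ((fun b => (if s = 0 then z k i b - zstar i b else v k i b - vstar i b) - (if s = 0 then z k j b - zstar j b else v k j b - vstar j b)) ⬝ᵥ R.mulVec (fun b => (if t = 0 then z k i b - zstar i b else v k i b - vstar i b) - (if t = 0 then z k j b - zstar j b else v k j b - vstar j b)))) :=
    (red3 (M1 σ) R (fun s i b => if s = 0 then z k i b - zstar i b else v k i b - vstar i b)).trans
      (master (fun p q : Fin 2 → Fin c → ℝ => ∑ s, ∑ t, M1 σ s t * (p s ⬝ᵥ R.mulVec (q t)))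
        hB3 n hn
        (fun i s b => if s = 0 then z k i b - zstar i b else v k i b - vstar i b))
  rw [F1, F0, F2, F3]
  -- combine sums and bound each pair term
  have hsum : (∑ i, ∑ j, ((fun a => (x (k+1) i a - xstar i a) - (x (k+1) j a - xstar j a)) ⬝ᵥ Q.mulVec (fun a => (x (k+1) i a - xstar i a) - (x (k+1) j a - xstar j a)))) - ρ^2 * (∑ i, ∑ j, ((fun a => (x k i a - xstar i a) - (x k j a - xstar j a)) ⬝ᵥ Q.mulVec (fun a => (x k i a - xstar i a) - (x k j a - xstar j a))))
      + (∑ i, ∑ j, (∑ s, ∑ t, M0 m L s t * (((if s = 0 then y k i - ystar i else u k i - ustar i) - (if s = 0 then y k j - ystar j else u k j - ustar j)) * ((if t = 0 then y k i - ystar i else u k i - ustar i) - (if t = 0 then y k j - ystar j else u k j - ustar j))))) + (∑ i, ∑ j, (∑ s, ∑ t, M1 σ s t * ((fun b => (if s = 0 then z k i b - zstar i b else v k i b - vstar i b) - (if s = 0 then z k j b - zstar j b else v k j b - vstar j b)) ⬝ᵥ R.mulVec (fun b => (if t = 0 then z k i b - zstar i b else v k i b - vstar i b) - (if t = 0 then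 z k j b - zstar j b else v k j b - vstar j b))))) ≤ 0 := by
    have hsplit : (∑ i, ∑ j, (((fun a => (x (k+1) i a - xstar i a) - (x (k+1) j a - xstar j a)) ⬝ᵥ Q.mulVec (fun a => (x (k+1) i a - xstar i a) - (x (k+1) j a - xstar j a))) - ρ^2 * ((fun a => (x k i a - xstar i a) - (x k j a - xstar j a)) ⬝ᵥ Q.mulVec (fun a => (x k i a - xstar i a) - (x k j a - xstar j a))) + (∑ s, ∑ t, M0 m L s t * (((if s = 0 then y k i - ystar i else u k i - ustar i) - (if s = 0 then y k j - ystar j else u k j - ustar j)) * ((if t = 0 then y k i - ystar i else u k i - ustar i) - (if t = 0 then y k j - ystar j else u k j - ustar j)))) + (∑ s, ∑ t, M1 σ s t * ((fun b => (if s = 0 then z k i b - zstar i b else v k i b - vstar i b) - (if s = 0 then z k j b - zstar j b else v k j b - vstar j b)) ⬝ᵥ R.mulVec (fun b => (if t = 0 then z k i b - zstar i b else v k i b - vstar i b) - (if t = 0 then z k j b - zstar j b else v k j b - vstar j b))))))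
        = (∑ i, ∑ j, ((fun a => (x (k+1) i a - xstar i a) - (x (k+1) j a - xstar j a)) ⬝ᵥ Q.mulVec (fun a => (x (k+1) i a - xstar i a) - (x (k+1) j a - xstar j a)))) - ρ^2 * (∑ i, ∑ j, ((fun a => (x k i a - xstar i a) - (x k j a - xstar j a)) ⬝ᵥ Q.mulVec (fun a => (x k i a - xstar i a) - (x k j a - xstar j a))))
          + (∑ i, ∑ j, (∑ s, ∑ t, M0 m L s t * (((if s = 0 then y k i - ystar i else u k i - ustar i) - (if s = 0 then y k j - ystar j else u k j - ustar j)) * ((if t = 0 then y k i - ystar i else u k i - ustar i) - (if t = 0 then y k j - ystar j else u k j - ustar j))))) + (∑ i, ∑ j, (∑ s, ∑ t, M1 σ s t * ((fun b => (if s = 0 then z k i b - zstar i b else v k i b - vstar i b) - (if s = 0 then z k j b - zstar j b else v k j b - vstar j b)) ⬝ᵥ R.mulVec (fun b => (if t = 0 then z k i b - zstar i b else v k i b - vstar i b) - (if t = 0 then z k j b - zstar j b else v k j b - vstar j b))))) := by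
      simp only [Finset.sum_add_distrib, Finset.sum_sub_distrib, ← Finset.mul_sum]
    rw [← hsplit]
    refine Finset.sum_nonpos fun i _ => Finset.sum_nonpos fun j _ => ?_
    -- convert the M0 and M1 blocks to explicit quadratic forms
    have c2 : (∑ s, ∑ t, M0 m L s t * (((if s = 0 then y k i - ystar i else u k i - ustar i) - (if s = 0 then y k j - ystar j else u k j - ustar j)) * ((if t = 0 then y k i - ystar i else u k i - ustar i) - (if t = 0 then y k j - ystar j else u k j - ustar j)))) = quadM0 m L ((y k i - ystar i) - (y k j - ystar j)) ((u k i - ustar i) - (u k j - ustar j)) := by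
      simp [Fin.sum_univ_two, M0, quadM0]
      ring
    have c3 : (∑ s, ∑ t, M1 σ s t * ((fun b => (if s = 0 then z k i b - zstar i b else v k i b - vstar i b) - (if s = 0 then z k j b - zstar j b else v k j b - vstar j b)) ⬝ᵥ R.mulVec (fun b => (if t = 0 then z k i b - zstar i b else v k i b - vstar i b) - (if t = 0 then z k j b - zstar j b else v k j b - vstar j b))))
        = (σ^2 - 1) * ((fun b => (z k i b - zstar i b) - (z k j b - zstar j b)) ⬝ᵥ R.mulVec (fun b => (z k i b - zstar i b) - (z k j b - zstar j b))) + (fun b => (z k i b - zstar i b) - (z k j b - zstar j b)) ⬝ᵥ R.mulVec (fun b => (v k i b - vstar i b) - (v k j b - vstar j b))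
          + (fun b => (v k i b - vstar i b) - (v k j b - vstar j b)) ⬝ᵥ R.mulVec (fun b => (z k i b - zstar i b) - (z k j b - zstar j b)) - (fun b => (v k i b - vstar i b) - (v k j b - vstar j b)) ⬝ᵥ R.mulVec (fun b => (v k i b - vstar i b) - (v k j b - vstar j b)) := by
      simp [Fin.sum_univ_two, M1]
      ring
    rw [c2, c3]
    -- difference trajectory identities
    have hx : (fun a => (x (k+1) i a - xstar i a) - (x (k+1) j a - xstar j a)) = A.mulVec (fun a => (x k i a - xstar i a) - (x k j a - xstar j a)) + ((u k i - ustar i) - (u k j - ustar j)) • Bu + Bv.mulVec (fun b => (v k i b - vstar i b) - (v k j b - vstar j b)) := by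
      funext a
      rw [show x (k+1) i a = (A.mulVec (x k i) + u k i • Bu + Bv.mulVec (v k i)) a by rw [← htraj1 k i],
        show x (k+1) j a = (A.mulVec (x k j) + u k j • Bu + Bv.mulVec (v k j)) a by rw [← htraj1 k j],
        show xstar i a = (A.mulVec (xstar i) + ustar i • Bu + Bv.mulVec (vstar i)) a by rw [← hstar1 i],
        show xstar j a = (A.mulVec (xstar j) + ustar j • Bu + Bv.mulVec (vstar j)) a by rw [← hstar1 j]]
      simp only [Pi.add_apply, Pi.smul_apply, smul_eq_mul, mulVec, dotProduct, mul_sub,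
        Finset.sum_sub_distrib]
      ring
    have hy : ((y k i - ystar i) - (y k j - ystar j)) = Cy ⬝ᵥ (fun a => (x k i a - xstar i a) - (x k j a - xstar j a)) + Dyu * ((u k i - ustar i) - (u k j - ustar j)) + Dyv ⬝ᵥ (fun b => (v k i b - vstar i b) - (v k j b - vstar j b)) := by
      rw [htraj2 k i, htraj2 k j, hstar2 i, hstar2 j]
      simp only [dotProduct, mul_sub, Finset.sum_sub_distrib]
      ring
    have hz : (fun b => (z k i b - zstar i b) - (z k j b - zstar j b)) = Cz.mulVec (fun a => (x k i a - xstar i a) - (x k j a - xstar j a)) + ((u k i - ustar i) - (u k j - ustar j)) • Dzu + Dzv.mulVec (fun b => (v k i b - vstar i b) - (v k j b - vstar j b)) := by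
      funext a
      rw [show z k i a = (Cz.mulVec (x k i) + u k i • Dzu + Dzv.mulVec (v k i)) a by rw [← htraj3 k i],
        show z k j a = (Cz.mulVec (x k j) + u k j • Dzu + Dzv.mulVec (v k j)) a by rw [← htraj3 k j],
        show zstar i a = (Cz.mulVec (xstar i) + ustar i • Dzu + Dzv.mulVec (vstar i)) a by rw [← hstar3 i],
        show zstar j a = (Cz.mulVec (xstar j) + ustar j • Dzu + Dzv.mulVec (vstar j)) a by rw [← hstar3 j]]
      simp only [Pi.add_apply, Pi.smul_apply, smul_eq_mul, mulVec, dotProduct, mul_sub,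
        Finset.sum_sub_distrib]
      ring
    exact pairIneq A Bu Bv Cy Dyu Dyv Cz Dzu Dzv Q R hR.1 hLMI2
      (fun a => (x k i a - xstar i a) - (x k j a - xstar j a)) (fun a => (x (k+1) i a - xstar i a) - (x (k+1) j a - xstar j a)) ((u k i - ustar i) - (u k j - ustar j)) ((y k i - ystar i) - (y k j - ystar j)) (fun b => (v k i b - vstar i b) - (v k j b - vstar j b)) (fun b => (z k i b - zstar i b) - (z k j b - zstar j b)) hx hy hz
  have hP : (0:ℝ) ≤ (2*(n:ℝ))⁻¹ := by positivity
  have h := mul_le_mul_of_nonneg_left hsum hP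
  rw [mul_zero] at h
  exact le_of_eq_of_le (by ring) h
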